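/- In the Banach algebra A = C([0,1], ℂ) of continuous complex-valued functions with the sup norm, the elements a_n defined by a_n(t) = t/n satisfy σ(a_n) = [0, 1/n] (as a subset of ℂ), and in particular 0 is an accumulation point of σ(a_n) for every n ≥ 1, while a_n → 0 in norm. Consequently, the set of elements a with 0 not an accumulation point of σ(a) is not open in A. -/

import Mathlib

open Filter Topology

/-- The elements `aₙ(t) = t/n` of `C([0,1], ℂ)`. -/
noncomputable def aseq (n : ℕ) : C(Set.Icc (0 : ℝ) 1, ℂ) :=
  ⟨fun t => ((t : ℝ) : ℂ) / (n : ℂ), by fun_prop⟩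

lemma aseq_spec (n : ℕ) (hn : 1 ≤ n) :
    spectrum ℂ (aseq n) =
      {z : ℂ | ∃ t : ℝ, t ∈ Set.Icc (0 : ℝ) (1 / (n : ℝ)) ∧ z = (t : ℂ)} := by
  have hn' : (0 : ℝ) < n := by exact_mod_cast hn
  rw [ContinuousMap.spectrum_eq_range]
  ext z
  simp only [Set.mem_range, Set.mem_setOf_eq, aseq, ContinuousMap.coe_mk]
  constructor
  · rintro ⟨⟨s, hs0, hs1⟩, rfl⟩
    refine ⟨s / n, ⟨by positivity, ?_⟩, by push_cast; ring⟩
    gcongr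
  · rintro ⟨t, ⟨ht0, ht1⟩, rfl⟩
    refine ⟨⟨t * n, ⟨by positivity, ?_⟩⟩, ?_⟩
    · calc t * n ≤ (1 / n) * n := by nlinarith
        _ = 1 := by field_simp
    · have hnC : (n : ℂ) ≠ 0 := by exact_mod_cast hn'.ne'
      push_cast
      field_simp

lemma aseq_acc (n : ℕ) (hn : 1 ≤ n) : AccPt (0 : ℂ) (𝓟 (spectrum ℂ (aseq n))) := by
  have hn' : (0 : ℝ) < n := by exact_mod_cast hn
  rw [aseq_spec n hn, accPt_iff_nhds]
  intro U hU
  have htendR : Tendsto (fun k : ℕ => (1 / ((n : ℝ) * (k + 1)) : ℝ)) atTop (𝓝 0) := by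
    have h1 : Tendsto (fun k : ℕ => ((n : ℝ) * (k + 1))) atTop atTop :=
      Tendsto.const_mul_atTop hn'
        (tendsto_atTop_add_const_right _ 1 (tendsto_natCast_atTop_atTop (R := ℝ)))
    have := h1.inv_tendsto_atTop
    simp only [one_div]
    exact this
  have htend : Tendsto (fun k : ℕ => ((1 / ((n : ℝ) * (k + 1)) : ℝ) : ℂ)) atTop (𝓝 0) := by
    have := (Complex.continuous_ofReal.tendsto 0).comp htendR
    simpa only [Function.comp_def, Complex.ofReal_zero] using this
  obtain ⟨k, hk⟩ := (htend.eventually_mem hU).exists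
  have hkpos : (0 : ℝ) < 1 / ((n : ℝ) * (k + 1)) := by positivity
  refine ⟨((1 / ((n : ℝ) * (k + 1)) : ℝ) : ℂ), ⟨hk, ?_⟩, ?_⟩
  · refine ⟨1 / ((n : ℝ) * (k + 1)), ⟨hkpos.le, ?_⟩, rfl⟩
    apply div_le_div_of_nonneg_left one_pos.le hn'
    nlinarith [Nat.cast_nonneg (α := ℝ) k]
  · exact_mod_cast hkpos.ne'

lemma aseq_norm_le (n : ℕ) : ‖aseq n‖ ≤ 1 / n := by
  apply ContinuousMap.norm_le _ (by positivity) |>.mpr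
  rintro ⟨t, ht0, ht1⟩
  rcases Nat.eq_zero_or_pos n with rfl | hn
  · simp [aseq]
  · have hn' : (0 : ℝ) < n := by exact_mod_cast hn
    simp only [aseq, ContinuousMap.coe_mk]
    rw [norm_div]
    simp only [Complex.norm_real, Complex.norm_natCast, Real.norm_eq_abs]
    rw [abs_of_nonneg ht0, div_le_div_iff₀ hn' hn']
    nlinarith

lemma aseq_tendsto : Tendsto aseq atTop (𝓝 0) := by
  rw [tendsto_zero_iff_norm_tendsto_zero]
  refine squeeze_zero (fun n => norm_nonneg _) aseq_norm_le ?_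
  simpa using (tendsto_one_div_atTop_nhds_zero_nat : Tendsto (fun n : ℕ => 1 / (n : ℝ)) atTop (𝓝 0))

theorem stmt16 :
    (∀ n : ℕ, 1 ≤ n →
      spectrum ℂ (aseq n) =
        {z : ℂ | ∃ t : ℝ, t ∈ Set.Icc (0 : ℝ) (1 / (n : ℝ)) ∧ z = (t : ℂ)} ∧
      AccPt (0 : ℂ) (𝓟 (spectrum ℂ (aseq n)))) ∧
    Tendsto aseq atTop (𝓝 0) ∧
    ¬ IsOpen {f : C(Set.Icc (0 : ℝ) 1, ℂ) | ¬ AccPt (0 : ℂ) (𝓟 (spectrum ℂ f))} := by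
  refine ⟨fun n hn => ⟨aseq_spec n hn, aseq_acc n hn⟩, aseq_tendsto, ?_⟩
  intro hopen
  have h0 : (0 : C(Set.Icc (0 : ℝ) 1, ℂ)) ∈
      {f : C(Set.Icc (0 : ℝ) 1, ℂ) | ¬ AccPt (0 : ℂ) (𝓟 (spectrum ℂ f))} := by
    have hspec : spectrum ℂ (0 : C(Set.Icc (0 : ℝ) 1, ℂ)) = {0} := by
      rw [ContinuousMap.spectrum_eq_range]
      ext z
      simp only [Set.mem_range, ContinuousMap.coe_zero, Pi.zero_apply, Set.mem_singleton_iff]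
      exact ⟨fun ⟨x, h⟩ => h.symm, fun h => ⟨⟨0, by norm_num⟩, h.symm⟩⟩
    rw [Set.mem_setOf_eq, hspec, accPt_iff_nhds]
    push_neg
    exact ⟨Set.univ, univ_mem, fun y hy => ((Set.mem_inter_iff y _ _).mp hy).2⟩
  have := (aseq_tendsto.eventually_mem (hopen.mem_nhds h0)).and (eventually_ge_atTop 1)
  obtain ⟨n, hmem, hn⟩ := this.exists
  exact hmem (aseq_acc n hn)
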